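/- arXiv:1511.08595 — 2 statements merged into one kernel-verified Lean document; each statement's English description precedes it below -/
import Mathlib

section
/- Let ξ : ℤ → {0,1} be a non-periodic Toeplitz sequence with period structure (p_ℓ)_{ℓ≥1}, Ω the associated odometer with distinguished element e, and W = cl(U) the window constructed from ξ. Then {n ∈ ℤ : n·e ∈ W} = {n ∈ ℤ : ξ(n) = 1}. -/
open MeasureTheory Set Filter Topology

noncomputable section

instance (n : ℕ) : TopologicalSpace (ZMod n) := ⊥
instance (n : ℕ) : DiscreteTopology (ZMod n) := ⟨rfl⟩
instance (n : ℕ) : MeasurableSpace (ZMod n) := ⊤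

/-- The `p`-skeleton of a sequence `ξ : ℤ → {0,1}`:
the set of `p`-periodic positions of `ξ`. -/
def Per (ξ : ℤ → Fin 2) (p : ℕ) : Set ℤ := {k | ∀ n : ℤ, ξ (k + n * p) = ξ k}

/-- The density `D(p)` of the `p`-skeleton:
`D(p) = #(Per(p,ξ) ∩ [0, p-1]) / p`. -/
def skelDensity (ξ : ℤ → Fin 2) (p : ℕ) : ℝ :=
  ((Per ξ p ∩ Set.Ico (0 : ℤ) (p : ℤ)).ncard : ℝ) / p

/-- `ξ` is a Toeplitz sequence: every position is periodic for some period `p ≥ 1`. -/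
def IsToeplitz (ξ : ℤ → Fin 2) : Prop := ∀ k : ℤ, ∃ p : ℕ, 0 < p ∧ k ∈ Per ξ p

/-- `ξ` is non-periodic: no `p ≥ 1` is a period of the whole sequence. -/
def IsNonPeriodic (ξ : ℤ → Fin 2) : Prop := ∀ p : ℕ, 0 < p → ∃ k : ℤ, ξ (k + p) ≠ ξ k

/-- `(p ℓ)` is a period structure for `ξ`: the `p ℓ` are positive, each divides the
next, and the `p ℓ`-skeletons exhaust `ℤ`. -/
def IsPeriodStructure (ξ : ℤ → Fin 2) (p : ℕ → ℕ) : Prop :=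
  (∀ ℓ, 0 < p ℓ) ∧ (∀ ℓ, p ℓ ∣ p (ℓ + 1)) ∧ ∀ k : ℤ, ∃ ℓ, k ∈ Per ξ (p ℓ)

/-- The odometer associated with a scale `p`, i.e. the closed subgroup of
`∏ ℓ, ℤ/p ℓ ℤ` of sequences compatible under the canonical projections
(whenever `p ℓ ∣ p (ℓ+1)`, which holds for period structures). -/
def odometer (p : ℕ → ℕ) : AddSubgroup (Π ℓ, ZMod (p ℓ)) where
  carrier := {x | ∀ ℓ, ∀ h : p ℓ ∣ p (ℓ + 1), ZMod.castHom h (ZMod (p ℓ)) (x (ℓ + 1)) = x ℓ}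
  zero_mem' := by intro ℓ _; simp
  add_mem' := by intro a b ha hb ℓ h; simp only [Pi.add_apply, map_add, ha ℓ h, hb ℓ h]
  neg_mem' := by intro a ha ℓ h; simp only [Pi.neg_apply, map_neg, ha ℓ h]

/-- The distinguished element `e` of the odometer, whose `ℓ`-th coordinate is
`1 mod p ℓ`; its `n`-th multiple `n • e` has `ℓ`-th coordinate `n mod p ℓ`. -/
def odometerGen (p : ℕ → ℕ) : odometer p := ⟨fun _ => 1, fun _ _ => map_one _⟩

/-- `A_s(ℓ) = {k mod p ℓ : k ∈ Per (p ℓ, ξ), ξ k = s} ⊆ ℤ/p ℓ ℤ`. -/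
def Aset (ξ : ℤ → Fin 2) (p : ℕ → ℕ) (ℓ : ℕ) (s : Fin 2) : Set (ZMod (p ℓ)) :=
  {c | ∃ k : ℤ, k ∈ Per ξ (p ℓ) ∧ ξ k = s ∧ (k : ZMod (p ℓ)) = c}

/-- `U_ℓ = {x ∈ Ω : x ℓ ∈ A_1(ℓ)}`. -/
def UsetL (ξ : ℤ → Fin 2) (p : ℕ → ℕ) (ℓ : ℕ) : Set (odometer p) :=
  {x | (x : Π ℓ, ZMod (p ℓ)) ℓ ∈ Aset ξ p ℓ 1}

/-- `V_ℓ = {x ∈ Ω : x ℓ ∈ A_0(ℓ)}`. -/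
def VsetL (ξ : ℤ → Fin 2) (p : ℕ → ℕ) (ℓ : ℕ) : Set (odometer p) :=
  {x | (x : Π ℓ, ZMod (p ℓ)) ℓ ∈ Aset ξ p ℓ 0}

/-- `U = ⋃ ℓ, U_ℓ`. -/
def Uset (ξ : ℤ → Fin 2) (p : ℕ → ℕ) : Set (odometer p) := ⋃ ℓ, UsetL ξ p ℓ

/-- `V = ⋃ ℓ, V_ℓ`. -/
def Vset (ξ : ℤ → Fin 2) (p : ℕ → ℕ) : Set (odometer p) := ⋃ ℓ, VsetL ξ p ℓ

/-- The window `W = cl(U)` constructed from `ξ`. -/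
def Wset (ξ : ℤ → Fin 2) (p : ℕ → ℕ) : Set (odometer p) := closure (Uset ξ p)


lemma per_cast_eq (ξ : ℤ → Fin 2) {q : ℕ} {k r : ℤ}
    (hk : k ∈ Per ξ q) (h : (r : ZMod q) = (k : ZMod q)) : ξ r = ξ k := by
  have hd : (q : ℤ) ∣ k - r := ((ZMod.intCast_eq_intCast_iff r k q).mp h).dvd
  obtain ⟨m, hm⟩ := hd
  have : r = k + (-m) * q := by linarith
  rw [this]; exact hk (-m)

lemma odometer_cast (p : ℕ → ℕ) (hdvd : ∀ ℓ, p ℓ ∣ p (ℓ+1)) (x : odometer p) :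
    ∀ L ℓ, ℓ ≤ L → ∀ k : ℤ, ((k : ZMod (p L)) = (x : Π i, ZMod (p i)) L) →
      (k : ZMod (p ℓ)) = (x : Π i, ZMod (p i)) ℓ := by
  intro L
  induction L with
  | zero => intro ℓ hℓ k hk; interval_cases ℓ; exact hk
  | succ L ih =>
    intro ℓ hℓ k hk
    rcases Nat.lt_or_ge ℓ (L+1) with h | h
    · apply ih ℓ (Nat.lt_succ_iff.mp h)
      have h2 := x.2 L (hdvd L)
      rw [← h2, ← hk, map_intCast]
    · have : ℓ = L + 1 := le_antisymm hℓ h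
      subst this; exact hk

lemma smul_gen_coord (p : ℕ → ℕ) (n : ℤ) (ℓ : ℕ) :
    ((n • odometerGen p : odometer p) : Π i, ZMod (p i)) ℓ = (n : ZMod (p ℓ)) := by
  have : ((n • odometerGen p : odometer p) : Π i, ZMod (p i))
      = n • ((odometerGen p : odometer p) : Π i, ZMod (p i)) := rfl
  rw [this]
  simp [odometerGen, zsmul_one]

/-- For a non-periodic Toeplitz sequence `ξ` with period structure
`(p ℓ)`, window `W = cl U` in the associated odometer, and distinguished element `e`:
`{n : n • e ∈ W} = {n : ξ n = 1}`. -/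
theorem toeplitz_window_points (ξ : ℤ → Fin 2) (hT : IsToeplitz ξ) (hNP : IsNonPeriodic ξ)
    (p : ℕ → ℕ) (hps : IsPeriodStructure ξ p) :
    {n : ℤ | n • odometerGen p ∈ Wset ξ p} = {n : ℤ | ξ n = 1} := by
  ext n
  simp only [Set.mem_setOf_eq]
  obtain ⟨hpos, hdvd, hskel⟩ := hps
  constructor
  · intro hW
    by_contra h1
    have h0 : ξ n = 0 := by
      have : ∀ a : Fin 2, a ≠ 1 → a = 0 := by decide
      exact this _ h1
    obtain ⟨ℓ, hℓ⟩ := hskel n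
    -- n • e ∈ V_ℓ, which is open and disjoint from U
    have hmemV : (n • odometerGen p) ∈ VsetL ξ p ℓ := by
      refine ⟨n, hℓ, h0, ?_⟩
      exact (smul_gen_coord p n ℓ).symm
    have hcont : Continuous (fun x : odometer p => (x : Π i, ZMod (p i)) ℓ) :=
      (continuous_apply ℓ).comp continuous_subtype_val
    have hopen : IsOpen (VsetL ξ p ℓ) :=
      (isOpen_discrete (Aset ξ p ℓ 0)).preimage hcont
    obtain ⟨x, hxV, hxU⟩ := (mem_closure_iff.mp hW) (VsetL ξ p ℓ) hopen hmemV
    obtain ⟨m, hxm⟩ := Set.mem_iUnion.mp hxU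
    obtain ⟨j, hjPer, hj1, hjx⟩ := hxm
    obtain ⟨k, hkPer, hk0, hkx⟩ := hxV
    set L := max ℓ m with hL
    haveI : NeZero (p L) := ⟨(hpos L).ne'⟩
    obtain ⟨r, hr⟩ := ZMod.intCast_surjective ((x : Π i, ZMod (p i)) L)
    have hrℓ : (r : ZMod (p ℓ)) = (x : Π i, ZMod (p i)) ℓ :=
      odometer_cast p hdvd x L ℓ (le_max_left _ _) r hr
    have hrm : (r : ZMod (p m)) = (x : Π i, ZMod (p i)) m :=
      odometer_cast p hdvd x L m (le_max_right _ _) r hr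
    have e0 : ξ r = ξ k := per_cast_eq ξ hkPer (by rw [hrℓ, ← hkx])
    have e1 : ξ r = ξ j := per_cast_eq ξ hjPer (by rw [hrm, ← hjx])
    rw [hk0] at e0
    rw [hj1] at e1
    rw [e0] at e1
    exact absurd e1 (by decide)
  · intro h1
    obtain ⟨ℓ, hℓ⟩ := hskel n
    apply subset_closure
    apply Set.mem_iUnion.mpr ⟨ℓ, ?_⟩
    exact ⟨n, hℓ, h1, (smul_gen_coord p n ℓ).symm⟩
end
end

section
/- Let ξ : ℤ → {0,1} be a non-periodic Toeplitz sequence with period structure (p_ℓ)_{ℓ≥1}, Ω the associated odometer with Haar probability measure μ, and W = cl(U) the window constructed from ξ. Then μ(∂W) = 1 − lim_{ℓ→∞} D(p_ℓ), where ∂W denotes the topological boundary of W in Ω and the limit exists because D(p_ℓ) is nondecreasing and bounded by 1. -/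
open MeasureTheory Set Filter Topology

noncomputable section

lemma fin2_cases (a : Fin 2) : a = 0 ∨ a = 1 := by omega

lemma per_shift {ξ : ℤ → Fin 2} {q : ℕ} {k k' : ℤ} (hk : k ∈ Per ξ q)
    (h : (k' : ZMod q) = (k : ZMod q)) : k' ∈ Per ξ q ∧ ξ k' = ξ k := by
  obtain ⟨c, hc⟩ : (q:ℤ) ∣ k' - k := ((ZMod.intCast_eq_intCast_iff _ _ _).1 h).symm.dvd
  have hk' : k' = k + c * q := by linarith [hc]
  constructor
  · intro n
    simp only [hk']
    rw [add_assoc, ← add_mul, hk (c + n), hk c]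
  · simpa only [hk'] using hk c

lemma per_mono {ξ : ℤ → Fin 2} {q r : ℕ} (h : q ∣ r) : Per ξ q ⊆ Per ξ r := by
  intro k hk n
  obtain ⟨c, rfl⟩ := h
  convert hk (n * c) using 3
  push_cast; ring

variable {p : ℕ → ℕ}

lemma dvd_chain (hd : ∀ ℓ, p ℓ ∣ p (ℓ + 1)) {i m : ℕ} (h : i ≤ m) : p i ∣ p m := by
  induction m with
  | zero => simp_all
  | succ m ih =>
    rcases Nat.lt_or_ge i (m+1) with h'|h'
    · exact (ih (by omega)).trans (hd m)
    · have : i = m + 1 := by omega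
      subst this; rfl

lemma zmod_cast_cast {a b c : ℕ} (h1 : a ∣ b) (h2 : b ∣ c) (x : ZMod c) :
    ZMod.castHom h1 (ZMod a) (ZMod.castHom h2 (ZMod b) x)
      = ZMod.castHom (h1.trans h2) (ZMod a) x := by
  rw [← RingHom.comp_apply, ZMod.castHom_comp]

/-- coordinates of an odometer point are compatible along the chain. -/
lemma coord_compat (hd : ∀ ℓ, p ℓ ∣ p (ℓ + 1)) (x : odometer p) {i m : ℕ} (h : i ≤ m) :
    ZMod.castHom (dvd_chain hd h) (ZMod (p i)) ((x : Π ℓ, ZMod (p ℓ)) m)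
      = (x : Π ℓ, ZMod (p ℓ)) i := by
  induction m with
  | zero =>
    have : i = 0 := by omega
    subst this
    simp
  | succ m ih =>
    rcases Nat.lt_or_ge i (m+1) with h'|h'
    · have h2 := x.2 m (hd m)
      rw [← ih (by omega), ← h2, zmod_cast_cast]
    · have : i = m + 1 := by omega
      subst this
      simp

def intToOdo (p : ℕ → ℕ) (k : ℤ) : odometer p :=
  ⟨fun ℓ => (k : ZMod (p ℓ)), fun ℓ h => by simp [map_intCast]⟩

instance (n : ℕ) : Countable (ZMod n) := by
  cases n
  · exact inferInstanceAs (Countable ℤ)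
  · exact inferInstanceAs (Countable (Fin _))

lemma measurable_coord (ℓ : ℕ) : Measurable (fun x : odometer p => (x : Π ℓ, ZMod (p ℓ)) ℓ) :=
  (measurable_pi_apply ℓ).comp measurable_subtype_coe

lemma measurableSet_coordPre (ℓ : ℕ) (S : Set (ZMod (p ℓ))) :
    MeasurableSet {x : odometer p | (x : Π ℓ, ZMod (p ℓ)) ℓ ∈ S} :=
  measurable_coord ℓ (by trivial)

lemma continuous_coord (ℓ : ℕ) : Continuous (fun x : odometer p => (x : Π ℓ, ZMod (p ℓ)) ℓ) :=
  (continuous_apply ℓ).comp continuous_subtype_val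

lemma isOpen_coordPre (ℓ : ℕ) (S : Set (ZMod (p ℓ))) :
    IsOpen {x : odometer p | (x : Π ℓ, ZMod (p ℓ)) ℓ ∈ S} :=
  IsOpen.preimage (continuous_coord ℓ) (isOpen_discrete S)

lemma measurable_translate (a : odometer p) : Measurable (fun x : odometer p => a + x) := by
  apply Measurable.subtype_mk
  apply measurable_pi_lambda
  intro ℓ
  apply measurable_to_countable'
  intro c
  have : (fun x : odometer p => ((a:Π ℓ, ZMod (p ℓ)) ℓ + (x:Π ℓ, ZMod (p ℓ)) ℓ)) ⁻¹' {c}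
      = {x : odometer p | (x : Π ℓ, ZMod (p ℓ)) ℓ ∈ ({-((a:Π ℓ, ZMod (p ℓ)) ℓ) + c} : Set (ZMod (p ℓ)))} := by
    ext x
    constructor
    · intro hx
      simp only [Set.mem_preimage, Set.mem_singleton_iff] at hx
      simp [Set.mem_singleton_iff, ← hx]
    · intro hx
      simp only [Set.mem_setOf_eq, Set.mem_singleton_iff] at hx
      simp [hx]
  exact this ▸ measurableSet_coordPre ℓ _

/-- all fibers of a coordinate have the same measure, by translation invariance. -/
lemma cyl_measure_eq (μ : Measure (odometer p)) (hμ : μ.IsAddHaarMeasure) (ℓ : ℕ)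
    (c c' : ZMod (p ℓ)) :
    μ {x : odometer p | (x : Π ℓ, ZMod (p ℓ)) ℓ = c} =
    μ {x : odometer p | (x : Π ℓ, ZMod (p ℓ)) ℓ = c'} := by
  obtain ⟨k, hk⟩ := ZMod.intCast_surjective (n := p ℓ) (c - c')
  set a := intToOdo p k with ha
  have hinv : Measure.map (fun x => a + x) μ = μ := hμ.toIsAddLeftInvariant.map_add_left_eq_self a
  have hmeas : MeasurableSet {x : odometer p | (x : Π ℓ, ZMod (p ℓ)) ℓ = c} := by
    have := measurableSet_coordPre (p := p) ℓ {c}; simpa using this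
  calc μ {x : odometer p | (x : Π ℓ, ZMod (p ℓ)) ℓ = c}
      = Measure.map (fun x => a + x) μ {x : odometer p | (x : Π ℓ, ZMod (p ℓ)) ℓ = c} := by
        rw [hinv]
    _ = μ ((fun x => a + x) ⁻¹' {x : odometer p | (x : Π ℓ, ZMod (p ℓ)) ℓ = c}) :=
        Measure.map_apply (measurable_translate a) hmeas
    _ = μ {x : odometer p | (x : Π ℓ, ZMod (p ℓ)) ℓ = c'} := by
        congr 1
        ext x
        simp only [Set.mem_preimage, Set.mem_setOf_eq]
        have : ((a + x : odometer p) : Π ℓ, ZMod (p ℓ)) ℓ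
            = (c - c') + (x : Π ℓ, ZMod (p ℓ)) ℓ := by
          show (a : Π ℓ, ZMod (p ℓ)) ℓ + (x : Π ℓ, ZMod (p ℓ)) ℓ = _
          rw [ha]; show (k : ZMod (p ℓ)) + _ = _; rw [hk]
        rw [this]
        constructor
        · intro h
          have := congrArg (fun z => z - (c - c')) h
          simpa [sub_sub_cancel, add_sub_cancel_left] using this
        · intro h; rw [h]; ring

lemma cyl_measure (hpos : ∀ ℓ, 0 < p ℓ) (μ : Measure (odometer p)) (hμ : μ.IsAddHaarMeasure)
    (hμ1 : IsProbabilityMeasure μ) (ℓ : ℕ) (c : ZMod (p ℓ)) :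
    μ {x : odometer p | (x : Π ℓ, ZMod (p ℓ)) ℓ = c} = (p ℓ : ENNReal)⁻¹ := by
  haveI : NeZero (p ℓ) := ⟨(hpos ℓ).ne'⟩
  set v := μ {x : odometer p | (x : Π ℓ, ZMod (p ℓ)) ℓ = c} with hv
  have huniv : (Set.univ : Set (odometer p)) =
      ⋃ d : ZMod (p ℓ), {x : odometer p | (x : Π ℓ, ZMod (p ℓ)) ℓ = d} := by
    ext x; simp
  have hdisj : Pairwise (Function.onFun Disjoint
      (fun d : ZMod (p ℓ) => {x : odometer p | (x : Π ℓ, ZMod (p ℓ)) ℓ = d})) := by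
    intro d d' hdd'
    refine Set.disjoint_left.2 ?_
    intro x hx hx'
    exact hdd' (hx.symm.trans hx')
  have hmeas : ∀ d : ZMod (p ℓ),
      MeasurableSet {x : odometer p | (x : Π ℓ, ZMod (p ℓ)) ℓ = d} := by
    intro d; have := measurableSet_coordPre (p := p) ℓ {d}; simpa using this
  have h1 : (1 : ENNReal) = ∑' d : ZMod (p ℓ), μ {x : odometer p | (x:Π ℓ, ZMod (p ℓ)) ℓ = d} := by
    rw [← measure_iUnion hdisj hmeas, ← huniv, measure_univ]
  rw [tsum_fintype] at h1
  have hsum : ∀ d : ZMod (p ℓ), μ {x : odometer p | (x : Π ℓ, ZMod (p ℓ)) ℓ = d} = v :=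
    fun d => cyl_measure_eq μ hμ ℓ d c
  simp only [hsum, Finset.sum_const, Finset.card_univ, ZMod.card] at h1
  have h2 : (p ℓ : ENNReal) * v = 1 := by rw [← nsmul_eq_mul]; exact h1.symm
  calc v = (p ℓ : ENNReal)⁻¹ * ((p ℓ : ENNReal) * v) := by
        rw [← mul_assoc, ENNReal.inv_mul_cancel (by simp [(hpos ℓ).ne']) (by simp), one_mul]
    _ = (p ℓ : ENNReal)⁻¹ := by rw [h2, mul_one]



lemma coordPre_measure (hpos : ∀ ℓ, 0 < p ℓ) (μ : Measure (odometer p))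
    (hμ : μ.IsAddHaarMeasure) (hμ1 : IsProbabilityMeasure μ) (ℓ : ℕ) (S : Set (ZMod (p ℓ))) :
    μ {x : odometer p | (x : Π ℓ, ZMod (p ℓ)) ℓ ∈ S} = S.ncard * (p ℓ : ENNReal)⁻¹ := by
  haveI : NeZero (p ℓ) := ⟨(hpos ℓ).ne'⟩
  have hS : S.Finite := S.toFinite
  have hrw : {x : odometer p | (x : Π ℓ, ZMod (p ℓ)) ℓ ∈ S}
      = ⋃ c ∈ hS.toFinset, {x : odometer p | (x : Π ℓ, ZMod (p ℓ)) ℓ = c} := by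
    ext x; simp
  rw [hrw, measure_biUnion_finset]
  · rw [Finset.sum_congr rfl (fun c _ => cyl_measure hpos μ hμ hμ1 ℓ c), Finset.sum_const,
      nsmul_eq_mul]
    congr 2
    exact (Set.ncard_eq_toFinset_card S hS).symm
  · intro c _ c' _ hcc'
    refine Set.disjoint_left.2 fun x hx hx' => hcc' (hx.symm.trans hx')
  · intro c _
    have := measurableSet_coordPre (p := p) ℓ {c}; simpa using this

lemma fin2_ne_ne {a b s : Fin 2} (ha : a ≠ s) (hb : b ≠ s) : a = b := by omega

lemma fin2_ne {a s t : Fin 2} (ha : a ≠ s) (hst : s ≠ t) : a = t := by omega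

lemma mem_asetUnion {ξ : ℤ → Fin 2} {ℓ : ℕ} {c : ZMod (p ℓ)} :
    c ∈ Aset ξ p ℓ 0 ∪ Aset ξ p ℓ 1 ↔ ∃ k ∈ Per ξ (p ℓ), (k : ZMod (p ℓ)) = c := by
  constructor
  · rintro (⟨k, hk, _, rfl⟩ | ⟨k, hk, _, rfl⟩) <;> exact ⟨k, hk, rfl⟩
  · rintro ⟨k, hk, rfl⟩
    rcases fin2_cases (ξ k) with h | h
    · exact Or.inl ⟨k, hk, h, rfl⟩
    · exact Or.inr ⟨k, hk, h, rfl⟩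

lemma per_ncard_eq {ξ : ℤ → Fin 2} {q : ℕ} (hq : 0 < q) :
    (Per ξ q ∩ Set.Ico (0 : ℤ) (q : ℤ)).ncard
      = {c : ZMod q | ∃ k ∈ Per ξ q, (k : ZMod q) = c}.ncard := by
  have himg : (fun k : ℤ => (k : ZMod q)) '' (Per ξ q ∩ Set.Ico (0 : ℤ) (q : ℤ))
      = {c : ZMod q | ∃ k ∈ Per ξ q, (k : ZMod q) = c} := by
    ext c
    constructor
    · rintro ⟨k, ⟨hk, _⟩, rfl⟩
      exact ⟨k, hk, rfl⟩
    · rintro ⟨k, hk, rfl⟩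
      refine ⟨k % q, ⟨?_, ?_, ?_⟩, ?_⟩
      · exact (per_shift hk (by rw [ZMod.intCast_eq_intCast_iff', Int.emod_emod_of_dvd _ dvd_rfl])).1
      · exact Int.emod_nonneg k (by exact_mod_cast hq.ne')
      · exact Int.emod_lt_of_pos k (by exact_mod_cast hq)
      · rw [ZMod.intCast_eq_intCast_iff', Int.emod_emod_of_dvd _ dvd_rfl]
  rw [← himg]
  refine (Set.ncard_image_of_injOn ?_).symm
  intro a ha b hb hab
  rw [ZMod.intCast_eq_intCast_iff'] at hab
  rw [Int.emod_eq_of_lt ha.2.1 ha.2.2, Int.emod_eq_of_lt hb.2.1 hb.2.2] at hab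
  exact hab

lemma skelDensity_eq {ξ : ℤ → Fin 2} (hpos : ∀ ℓ, 0 < p ℓ) (ℓ : ℕ) :
    skelDensity ξ (p ℓ) = ((Aset ξ p ℓ 0 ∪ Aset ξ p ℓ 1).ncard : ℝ) / p ℓ := by
  rw [skelDensity, per_ncard_eq (hpos ℓ)]
  have hset : {c : ZMod (p ℓ) | ∃ k ∈ Per ξ (p ℓ), (k : ZMod (p ℓ)) = c}
      = Aset ξ p ℓ 0 ∪ Aset ξ p ℓ 1 := by
    ext c
    rw [Set.mem_setOf_eq, mem_asetUnion]
  rw [hset]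

lemma setL_mono {ξ : ℤ → Fin 2} (hd : ∀ ℓ, p ℓ ∣ p (ℓ + 1)) (ℓ : ℕ) (s : Fin 2) :
    {x : odometer p | (x : Π ℓ, ZMod (p ℓ)) ℓ ∈ Aset ξ p ℓ s}
      ⊆ {x : odometer p | (x : Π ℓ, ZMod (p ℓ)) (ℓ + 1) ∈ Aset ξ p (ℓ + 1) s} := by
  rintro x ⟨k, hk, hks, hkc⟩
  obtain ⟨k', hk'⟩ := ZMod.intCast_surjective ((x : Π ℓ, ZMod (p ℓ)) (ℓ + 1))
  have hcast : (k' : ZMod (p ℓ)) = (k : ZMod (p ℓ)) := by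
    have h2 := x.2 ℓ (hd ℓ)
    rw [hkc, ← h2, ← hk', map_intCast]
  obtain ⟨hper, hval⟩ := per_shift hk hcast
  exact ⟨k', per_mono (hd ℓ) hper, hval.trans hks, hk'⟩

lemma val_eq_of_mem {ξ : ℤ → Fin 2} (hd : ∀ ℓ, p ℓ ∣ p (ℓ + 1)) {x : odometer p}
    {ℓ m : ℕ} (hlm : ℓ ≤ m) {s t : Fin 2}
    (hs : (x : Π ℓ, ZMod (p ℓ)) ℓ ∈ Aset ξ p ℓ s)
    (ht : (x : Π ℓ, ZMod (p ℓ)) m ∈ Aset ξ p m t) : s = t := by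
  obtain ⟨k, hk, hks, hkc⟩ := hs
  obtain ⟨k', hk', hkt, hkc'⟩ := ht
  have hcast : (k' : ZMod (p ℓ)) = (k : ZMod (p ℓ)) := by
    rw [hkc, ← coord_compat hd x hlm, ← hkc', map_intCast]
  rw [← hks, ← hkt, (per_shift hk hcast).2]

lemma mem_closure_setL {ξ : ℤ → Fin 2} (hd : ∀ ℓ, p ℓ ∣ p (ℓ + 1))
    (hexh : ∀ k : ℤ, ∃ ℓ, k ∈ Per ξ (p ℓ)) {s t : Fin 2} (hst : s ≠ t) (x : odometer p)
    (hx : ∀ m, (x : Π ℓ, ZMod (p ℓ)) m ∉ Aset ξ p m t) :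
    x ∈ closure (⋃ ℓ, {y : odometer p | (y : Π ℓ, ZMod (p ℓ)) ℓ ∈ Aset ξ p ℓ s}) := by
  have key : ∀ m, ∃ k : ℤ, (k : ZMod (p m)) = (x : Π ℓ, ZMod (p ℓ)) m ∧ ξ k = s := by
    intro m
    by_contra h
    push_neg at h
    obtain ⟨k0, hk0⟩ := ZMod.intCast_surjective ((x : Π ℓ, ZMod (p ℓ)) m)
    apply hx m
    refine ⟨k0, ?_, ?_, hk0⟩
    · intro n
      have h1 : ξ (k0 + n * p m) ≠ s := h _ (by push_cast; simp [hk0])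
      exact fin2_ne_ne h1 (h _ hk0)
    · exact fin2_ne (h _ hk0) hst
  choose k hk1 hk2 using key
  refine mem_closure_of_tendsto (b := (atTop : Filter ℕ)) (f := fun m => intToOdo p (k m)) ?_ ?_
  · rw [tendsto_subtype_rng, tendsto_pi_nhds]
    intro i
    refine Tendsto.congr' ?_ tendsto_const_nhds
    filter_upwards [eventually_ge_atTop i] with m him
    show (x : Π ℓ, ZMod (p ℓ)) i = ((k m : ℤ) : ZMod (p i))
    rw [show ((k m : ℤ) : ZMod (p i))
        = ZMod.castHom (dvd_chain hd him) (ZMod (p i)) ((k m : ℤ) : ZMod (p m)) by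
      rw [map_intCast], hk1 m, coord_compat hd x him]
  · filter_upwards with m
    obtain ⟨ℓ', hℓ'⟩ := hexh (k m)
    exact Set.mem_iUnion.2 ⟨ℓ', ⟨k m, hℓ', hk2 m, rfl⟩⟩


lemma frontier_Wset {ξ : ℤ → Fin 2} (hd : ∀ ℓ, p ℓ ∣ p (ℓ + 1))
    (hexh : ∀ k : ℤ, ∃ ℓ, k ∈ Per ξ (p ℓ)) :
    frontier (Wset ξ p) = (Uset ξ p ∪ Vset ξ p)ᶜ := by
  have hUopen : IsOpen (Uset ξ p) := isOpen_iUnion fun ℓ => isOpen_coordPre ℓ _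
  have hVopen : IsOpen (Vset ξ p) := isOpen_iUnion fun ℓ => isOpen_coordPre ℓ _
  have hUV : ∀ x : odometer p, x ∈ Uset ξ p → x ∉ Vset ξ p := by
    intro x hxU hxV
    obtain ⟨ℓ, hℓ⟩ := Set.mem_iUnion.1 hxU
    obtain ⟨m, hm⟩ := Set.mem_iUnion.1 hxV
    rcases le_total ℓ m with h | h
    · exact absurd (val_eq_of_mem hd h hℓ hm) (by decide)
    · exact absurd (val_eq_of_mem hd h hm hℓ) (by decide)
  have hUVsub : Uset ξ p ⊆ (Vset ξ p)ᶜ := fun x hx => hUV x hx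
  have hWV : Wset ξ p ⊆ (Vset ξ p)ᶜ :=
    closure_minimal hUVsub hVopen.isClosed_compl
  apply Set.Subset.antisymm
  · intro x hx
    have hxW : x ∈ Wset ξ p := by
      have := hx.1
      rwa [Wset, closure_closure] at this
    intro hmem
    rcases hmem with hU | hV
    · exact hx.2 (interior_maximal subset_closure hUopen hU)
    · exact hWV hxW hV
  · intro x hx
    simp only [Set.mem_compl_iff, Set.mem_union, not_or] at hx
    obtain ⟨hxU, hxV⟩ := hx
    have hx1 : ∀ m, (x : Π ℓ, ZMod (p ℓ)) m ∉ Aset ξ p m 1 := by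
      intro m hm
      exact hxU (Set.mem_iUnion.2 ⟨m, hm⟩)
    have hx0 : ∀ m, (x : Π ℓ, ZMod (p ℓ)) m ∉ Aset ξ p m 0 := by
      intro m hm
      exact hxV (Set.mem_iUnion.2 ⟨m, hm⟩)
    have hclU : x ∈ Wset ξ p := mem_closure_setL hd hexh (by decide : (1 : Fin 2) ≠ 0) x hx0
    have hclV : x ∈ closure (Vset ξ p) := mem_closure_setL hd hexh (by decide : (0 : Fin 2) ≠ 1) x hx1
    refine ⟨subset_closure hclU, fun hint => ?_⟩
    obtain ⟨y, hy1, hy2⟩ := mem_closure_iff.1 hclV (interior (Wset ξ p)) isOpen_interior hint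
    exact hWV (interior_subset hy1) hy2

/-- For a non-periodic Toeplitz sequence `ξ` with period structure
`(p ℓ)`, the Haar probability measure `μ` of the associated odometer satisfies
`μ (∂W) = 1 - lim_ℓ D(p ℓ)`, the limit existing since `D(p ℓ)` is nondecreasing
and bounded by `1`. -/
theorem toeplitz_boundary_measure (ξ : ℤ → Fin 2) (hT : IsToeplitz ξ) (hNP : IsNonPeriodic ξ)
    (p : ℕ → ℕ) (hps : IsPeriodStructure ξ p)
    (μ : Measure (odometer p)) (hμ : μ.IsAddHaarMeasure) (hμ1 : IsProbabilityMeasure μ) :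
    ∃ L : ℝ, Tendsto (fun ℓ => skelDensity ξ (p ℓ)) atTop (𝓝 L) ∧
      Monotone (fun ℓ => skelDensity ξ (p ℓ)) ∧ (∀ ℓ, skelDensity ξ (p ℓ) ≤ 1) ∧
      μ (frontier (Wset ξ p)) = ENNReal.ofReal (1 - L) := by
  obtain ⟨hpos, hd, hexh⟩ := hps
  set T : ℕ → Set (odometer p) := fun ℓ => UsetL ξ p ℓ ∪ VsetL ξ p ℓ with hT'
  have hTmeas : ∀ ℓ, MeasurableSet (T ℓ) := fun ℓ =>
    (measurableSet_coordPre ℓ _).union (measurableSet_coordPre ℓ _)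
  have hTrw : ∀ ℓ, T ℓ
      = {x : odometer p | (x : Π ℓ, ZMod (p ℓ)) ℓ ∈ Aset ξ p ℓ 0 ∪ Aset ξ p ℓ 1} := by
    intro ℓ; ext x
    simp [hT', UsetL, VsetL, Set.mem_union, or_comm]
  have hTμ : ∀ ℓ, μ (T ℓ) = ((Aset ξ p ℓ 0 ∪ Aset ξ p ℓ 1).ncard) * (p ℓ : ENNReal)⁻¹ := by
    intro ℓ; rw [hTrw ℓ]; exact coordPre_measure hpos μ hμ hμ1 ℓ _
  have hskel : ∀ ℓ, skelDensity ξ (p ℓ) = (μ (T ℓ)).toReal := by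
    intro ℓ
    rw [skelDensity_eq hpos ℓ, hTμ ℓ, ENNReal.toReal_mul, ENNReal.toReal_inv]
    simp [div_eq_mul_inv]
  have hTmono : Monotone T := by
    apply monotone_nat_of_le_succ
    intro ℓ
    exact Set.union_subset_union (setL_mono hd ℓ 1) (setL_mono hd ℓ 0)
  have hTunion : ⋃ ℓ, T ℓ = Uset ξ p ∪ Vset ξ p := Set.iUnion_union_distrib _ _
  have hUVmeas : MeasurableSet (Uset ξ p ∪ Vset ξ p) := by
    rw [← hTunion]; exact MeasurableSet.iUnion hTmeas
  refine ⟨(μ (Uset ξ p ∪ Vset ξ p)).toReal, ?_, ?_, ?_, ?_⟩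
  · have h1 : Tendsto (fun ℓ => μ (T ℓ)) atTop (𝓝 (μ (⋃ ℓ, T ℓ))) :=
      tendsto_measure_iUnion_atTop hTmono
    rw [hTunion] at h1
    have h2 := (ENNReal.tendsto_toReal (measure_ne_top μ _)).comp h1
    exact h2.congr fun ℓ => (hskel ℓ).symm
  · intro a b hab
    simp only [hskel a, hskel b]
    exact ENNReal.toReal_mono (measure_ne_top μ _) (measure_mono (hTmono hab))
  · intro ℓ
    rw [show skelDensity ξ (p ℓ) = (μ (T ℓ)).toReal from hskel ℓ]
    calc (μ (T ℓ)).toReal ≤ (1 : ENNReal).toReal :=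
          ENNReal.toReal_mono ENNReal.one_ne_top prob_le_one
      _ = 1 := by simp
  · rw [frontier_Wset hd hexh, measure_compl hUVmeas (measure_ne_top μ _), measure_univ,
      ENNReal.ofReal_sub _ ENNReal.toReal_nonneg, ENNReal.ofReal_one,
      ENNReal.ofReal_toReal (measure_ne_top μ _)]
end
end
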